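/- Let $V$ be a finite-dimensional $\mathbb{C}(u)$-vector space spanned by finitely many vectors $f_{\lambda,k,k'}$ indexed by $\lambda \in \mathbb{C}^*$, $k \ge 0$, $k' \ge 0$ (all but finitely many zero). For $m \ge 0$ set $\mu_m = \sum_{\lambda,k,k'} \lambda^m m^k u^{-m k'} f_{\lambda,k,k'} \in V$. Then the vectors $(\mu_m)_{m \ge 0}$ span $V$. -/

import Mathlib

open Polynomial

section Key

variable {F : Type*} [Field F]

/-- The operator on polynomials corresponding to `a(m) ↦ a(m+1) - b₀ a(m)`
on sequences of the form `m ↦ b^m P(m)`. -/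
noncomputable def Tmap (b₀ b : F) (P : F[X]) : F[X] :=
  b • P.comp (X + 1) - b₀ • P

lemma Tmap_zero (b₀ b : F) : Tmap b₀ b 0 = 0 := by simp [Tmap]

lemma natDegree_comp_X_add_one (P : F[X]) : (P.comp (X + 1)).natDegree = P.natDegree := by
  rw [natDegree_comp]
  have : (X + 1 : F[X]).natDegree = 1 := by
    rw [← C_1, natDegree_X_add_C]
  rw [this, mul_one]

lemma leadingCoeff_comp_X_add_one (P : F[X]) :
    (P.comp (X + 1)).leadingCoeff = P.leadingCoeff := by
  rcases eq_or_ne P 0 with rfl | hP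
  · simp
  · have hd : (X + 1 : F[X]).natDegree = 1 := by rw [← C_1, natDegree_X_add_C]
    have hl : (X + 1 : F[X]).leadingCoeff = 1 := by rw [← C_1, leadingCoeff_X_add_C]
    rw [leadingCoeff_comp (by rw [hd]; norm_num), hl, one_pow, mul_one]

lemma degree_Tmap_lt (b₀ : F) (P : F[X]) (hP : P ≠ 0) :
    (Tmap b₀ b₀ P).degree < P.degree := by
  have hcomp : P.comp (X + 1) ≠ 0 := by
    intro h
    have := leadingCoeff_comp_X_add_one P
    rw [h, leadingCoeff_zero] at this
    exact hP (leadingCoeff_eq_zero.mp this.symm)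
  have hdeg : (P.comp (X + 1)).degree = P.degree := by
    rw [degree_eq_natDegree hcomp, degree_eq_natDegree hP, natDegree_comp_X_add_one]
  have hsub : (P.comp (X + 1) - P).degree < P.degree := by
    have := degree_sub_lt hdeg hcomp (leadingCoeff_comp_X_add_one P)
    rwa [hdeg] at this
  calc (Tmap b₀ b₀ P).degree = (b₀ • (P.comp (X + 1) - P)).degree := by
        congr 1; rw [Tmap, smul_sub]
    _ ≤ (P.comp (X + 1) - P).degree := degree_smul_le _ _
    _ < P.degree := hsub

lemma Tmap_iterate_zero (b₀ b : F) (n : ℕ) : (Tmap b₀ b)^[n] 0 = 0 := by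
  induction n with
  | zero => rfl
  | succ n ih => rw [Function.iterate_succ_apply, Tmap_zero]; exact ih

lemma Tmap_iterate_vanish (b₀ : F) : ∀ n (P : F[X]), P.natDegree < n → (Tmap b₀ b₀)^[n] P = 0 := by
  intro n
  induction n with
  | zero => intro P h; omega
  | succ n ih =>
    intro P h
    rw [Function.iterate_succ_apply]
    rcases eq_or_ne (Tmap b₀ b₀ P) 0 with h0 | h0
    · rw [h0]; exact Tmap_iterate_zero _ _ _
    · have hP : P ≠ 0 := by
        intro hP; rw [hP, Tmap_zero] at h0; exact h0 rfl
      have := Polynomial.natDegree_lt_natDegree h0 (degree_Tmap_lt b₀ P hP)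
      exact ih _ (by omega)

lemma Tmap_ne_zero {b₀ b : F} (hb : b ≠ b₀) {P : F[X]} (hP : P ≠ 0) :
    Tmap b₀ b P ≠ 0 := by
  intro h
  have hc : (Tmap b₀ b P).coeff P.natDegree = (b - b₀) * P.leadingCoeff := by
    rw [Tmap, coeff_sub, coeff_smul, coeff_smul]
    have h1 : (P.comp (X + 1)).coeff P.natDegree = P.leadingCoeff := by
      rw [← natDegree_comp_X_add_one P, ← leadingCoeff, leadingCoeff_comp_X_add_one]
    rw [h1, coeff_natDegree, smul_eq_mul, smul_eq_mul]
    ring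
  rw [h, coeff_zero] at hc
  have := mul_ne_zero (sub_ne_zero.mpr hb) (leadingCoeff_ne_zero.mpr hP)
  exact this hc.symm

lemma Tmap_iterate_ne_zero {b₀ b : F} (hb : b ≠ b₀) {P : F[X]} (hP : P ≠ 0) (n : ℕ) :
    (Tmap b₀ b)^[n] P ≠ 0 := by
  induction n with
  | zero => exact hP
  | succ n ih => rw [Function.iterate_succ_apply']; exact Tmap_ne_zero hb ih

variable [CharZero F]

lemma eval_nat_zero_imp_zero {P : F[X]} (h : ∀ m : ℕ, P.eval (m : F) = 0) : P = 0 := by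
  apply Polynomial.eq_zero_of_infinite_isRoot
  apply Set.Infinite.mono (s := Set.range (Nat.cast : ℕ → F))
  · rintro _ ⟨m, rfl⟩; exact h m
  · exact Set.infinite_range_of_injective Nat.cast_injective

omit [CharZero F] in
/-- Applying the difference operator to a vanishing combination. -/
lemma step {B : Finset F} {b₀ : F} {P : F → F[X]}
    (h : ∀ m : ℕ, ∑ b ∈ B, b ^ m * (P b).eval (m : F) = 0) :
    ∀ m : ℕ, ∑ b ∈ B, b ^ m * (Tmap b₀ b (P b)).eval (m : F) = 0 := by
  intro m
  have h1 := h (m + 1)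
  have h2 := h m
  calc ∑ b ∈ B, b ^ m * (Tmap b₀ b (P b)).eval (m : F)
      = (∑ b ∈ B, b ^ (m+1) * (P b).eval ((m+1 : ℕ) : F))
        - b₀ * ∑ b ∈ B, b ^ m * (P b).eval (m : F) := by
        rw [Finset.mul_sum, ← Finset.sum_sub_distrib]
        apply Finset.sum_congr rfl
        intro b _
        rw [Tmap]
        simp only [eval_sub, eval_smul, smul_eq_mul, eval_comp, eval_add, eval_X, eval_one]
        push_cast
        ring
    _ = 0 - b₀ * 0 := by rw [h1, h2]
    _ = 0 := by ring

lemma key : ∀ (B : Finset F), (∀ b ∈ B, b ≠ 0) → ∀ (P : F → F[X]),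
    (∀ m : ℕ, ∑ b ∈ B, b ^ m * (P b).eval (m : F) = 0) → ∀ b₀ ∈ B, P b₀ = 0 := by
  intro B
  classical
  induction B using Finset.strongInduction with
  | _ B ih =>
    intro hB P h b₀ hb₀
    set N := (P b₀).natDegree with hN
    set P' : F → F[X] := fun b => (Tmap b₀ b)^[N + 1] (P b) with hP'
    have h' : ∀ m : ℕ, ∑ b ∈ B, b ^ m * (P' b).eval (m : F) = 0 := by
      have : ∀ n, ∀ m : ℕ, ∑ b ∈ B, b ^ m * ((Tmap b₀ b)^[n] (P b)).eval (m : F) = 0 := by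
        intro n
        induction n with
        | zero => exact h
        | succ n ihn =>
          have := step (b₀ := b₀) (P := fun b => (Tmap b₀ b)^[n] (P b)) ihn
          intro m
          simpa [Function.iterate_succ_apply'] using this m
      exact this (N + 1)
    have hP'b₀ : P' b₀ = 0 := Tmap_iterate_vanish b₀ (N + 1) (P b₀) (by omega)
    have h'' : ∀ m : ℕ, ∑ b ∈ B.erase b₀, b ^ m * (P' b).eval (m : F) = 0 := by
      intro m
      have := h' m
      rwa [← Finset.add_sum_erase B _ hb₀, hP'b₀, eval_zero, mul_zero, zero_add] at this
    have hrest : ∀ b ∈ B.erase b₀, P' b = 0 :=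
      ih (B.erase b₀) (Finset.erase_ssubset hb₀)
        (fun b hb => hB b (Finset.mem_of_mem_erase hb)) P' h''
    have hPb : ∀ b ∈ B, b ≠ b₀ → P b = 0 := by
      intro b hb hbne
      by_contra hne
      exact Tmap_iterate_ne_zero hbne hne (N + 1)
        (hrest b (Finset.mem_erase.mpr ⟨hbne, hb⟩))
    have hb₀only : ∀ m : ℕ, b₀ ^ m * (P b₀).eval (m : F) = 0 := by
      intro m
      have := h m
      rwa [Finset.sum_eq_single b₀ (fun b hb hbne => by rw [hPb b hb hbne]; simp)
        (fun habs => absurd hb₀ habs)] at this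
    apply eval_nat_zero_imp_zero
    intro m
    have := hb₀only m
    have hb0 : b₀ ≠ 0 := hB b₀ hb₀
    exact (mul_eq_zero.mp this).resolve_left (pow_ne_zero m hb0)

end Key

instance : CharZero (RatFunc ℂ) :=
  charZero_of_injective_algebraMap (IsFractionRing.injective (Polynomial ℂ) (RatFunc ℂ))

lemma beta_inj {a b : ℂ} {j k : ℕ} (ha : a ≠ 0)
    (h : RatFunc.C a * (RatFunc.X)⁻¹ ^ j = RatFunc.C b * (RatFunc.X)⁻¹ ^ k) :
    a = b ∧ j = k := by
  have hX : (RatFunc.X : RatFunc ℂ) ≠ 0 := RatFunc.X_ne_zero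
  have h2 : RatFunc.C a * RatFunc.X ^ k = RatFunc.C b * RatFunc.X ^ j := by
    have h' := congrArg (· * RatFunc.X ^ (j + k)) h
    simp only [pow_add] at h'
    field_simp at h'
    apply mul_right_cancel₀ (b := RatFunc.X ^ j * RatFunc.X ^ k)
      (mul_ne_zero (pow_ne_zero _ hX) (pow_ne_zero _ hX))
    have hj : (RatFunc.X : RatFunc ℂ)⁻¹ ^ j * RatFunc.X ^ j = 1 := by
      rw [← mul_pow, inv_mul_cancel₀ hX, one_pow]
    have hk : (RatFunc.X : RatFunc ℂ)⁻¹ ^ k * RatFunc.X ^ k = 1 := by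
      rw [← mul_pow, inv_mul_cancel₀ hX, one_pow]
    linear_combination (RatFunc.X ^ j * RatFunc.X ^ k) ^ 2 * h
      - RatFunc.C a * RatFunc.X ^ j * RatFunc.X ^ k * RatFunc.X ^ k * hj
      + RatFunc.C b * RatFunc.X ^ j * RatFunc.X ^ j * RatFunc.X ^ k * hk
  have h3 : (algebraMap (Polynomial ℂ) (RatFunc ℂ)) (Polynomial.C a * Polynomial.X ^ k)
      = (algebraMap (Polynomial ℂ) (RatFunc ℂ)) (Polynomial.C b * Polynomial.X ^ j) := by
    simpa only [map_mul, map_pow, RatFunc.algebraMap_C, RatFunc.algebraMap_X] using h2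
  have h4 := IsFractionRing.injective (Polynomial ℂ) (RatFunc ℂ) h3
  have hb : b ≠ 0 := by
    rintro rfl
    simp only [map_zero, zero_mul] at h4
    have : Polynomial.C a ≠ 0 := by simpa using ha
    exact mul_ne_zero this (pow_ne_zero _ Polynomial.X_ne_zero) h4
  have hdeg : k = j := by
    have := congrArg Polynomial.natDegree h4
    rwa [Polynomial.natDegree_C_mul_X_pow k a ha, Polynomial.natDegree_C_mul_X_pow j b hb]
      at this
  subst hdeg
  have h5 : (Polynomial.C a : Polynomial ℂ) = Polynomial.C b :=
    mul_right_cancel₀ (pow_ne_zero _ Polynomial.X_ne_zero) h4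
  exact ⟨Polynomial.C_injective h5, rfl⟩

/-- Let `V` be a `ℂ(u)`-vector space spanned by finitely many vectors
`f_{λ,k,k'}` indexed by `λ ∈ ℂ*`, `k ≥ 0`, `k' ≥ 0` (all but finitely many zero,
and `f` vanishes when `λ = 0`).  For `m ≥ 0` set
`μ_m = ∑_{λ,k,k'} λ^m m^k u^{-m k'} • f_{λ,k,k'} ∈ V`.
Then the vectors `(μ_m)_{m ≥ 0}` span `V`. -/
theorem stmt11 (V : Type*) [AddCommGroup V] [Module (RatFunc ℂ) V]
    (f : ℂ × ℕ × ℕ → V)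
    (hfin : (Function.support f).Finite)
    (hunit : ∀ p : ℂ × ℕ × ℕ, p.1 = 0 → f p = 0)
    (hspan : Submodule.span (RatFunc ℂ) (Set.range f) = ⊤) :
    Submodule.span (RatFunc ℂ)
      (Set.range fun m : ℕ =>
        ∑ᶠ p : ℂ × ℕ × ℕ,
          (RatFunc.C (p.1 ^ m * (m : ℂ) ^ p.2.1) * RatFunc.X ^ (-(m * p.2.2 : ℤ))) • f p)
      = ⊤ := by
  classical
  set a : (ℂ × ℕ × ℕ) → ℕ → RatFunc ℂ := fun p m =>
    RatFunc.C (p.1 ^ m * (m : ℂ) ^ p.2.1) * RatFunc.X ^ (-(m * p.2.2 : ℤ)) with haa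
  set β : (ℂ × ℕ × ℕ) → RatFunc ℂ := fun p => RatFunc.C p.1 * (RatFunc.X)⁻¹ ^ p.2.2 with hβ
  have ha : ∀ (p : ℂ × ℕ × ℕ) (m : ℕ),
      a p m = (β p) ^ m * ((m : RatFunc ℂ)) ^ p.2.1 := by
    intro p m
    have hx : (RatFunc.X : RatFunc ℂ) ^ (-(m * p.2.2 : ℤ)) =
        ((RatFunc.X)⁻¹ ^ p.2.2) ^ m := by
      rw [show (-(m * p.2.2 : ℤ)) = -((m * p.2.2 : ℕ) : ℤ) by push_cast; ring,
        zpow_neg, zpow_natCast, ← inv_pow, mul_comm, pow_mul]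
    rw [haa, hβ]
    simp only [hx, map_mul, map_pow, mul_pow, map_natCast]
    ring
  set S := hfin.toFinset with hS
  set W := Submodule.span (RatFunc ℂ)
      (Set.range fun m : ℕ => ∑ᶠ p : ℂ × ℕ × ℕ, a p m • f p) with hWdef
  show W = ⊤
  rw [eq_top_iff, ← hspan, Submodule.span_le]
  rintro x ⟨p, rfl⟩
  show f p ∈ W
  by_cases hfp : f p = 0
  · rw [hfp]; exact W.zero_mem
  have hp1 : p.1 ≠ 0 := fun h => hfp (hunit p h)
  have hpS : p ∈ S := by rw [hS, Set.Finite.mem_toFinset]; exact hfp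
  -- pass to the quotient
  suffices hq : W.mkQ (f p) = 0 by
    rwa [Submodule.mkQ_apply, Submodule.Quotient.mk_eq_zero] at hq
  rw [← Module.forall_dual_apply_eq_zero_iff (RatFunc ℂ)]
  intro φ
  set c : ℂ × ℕ × ℕ → RatFunc ℂ := fun q => φ (W.mkQ (f q)) with hc
  -- the finsum is a finite sum over S
  have hμ : ∀ m : ℕ, (∑ᶠ q : ℂ × ℕ × ℕ, a q m • f q) = ∑ q ∈ S, a q m • f q := by
    intro m
    apply finsum_eq_finset_sum_of_support_subset
    intro q hq
    rw [hS, Set.Finite.coe_toFinset]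
    intro hq0
    simp [Function.mem_support, hq0] at hq
  have hμW : ∀ m : ℕ, (∑ q ∈ S, a q m • f q) ∈ W := by
    intro m
    rw [← hμ]
    exact Submodule.subset_span ⟨m, rfl⟩
  -- scalar relations
  have hrel : ∀ m : ℕ, ∑ q ∈ S, (β q) ^ m * ((m : RatFunc ℂ)) ^ q.2.1 * c q = 0 := by
    intro m
    have h0 : W.mkQ (∑ q ∈ S, a q m • f q) = 0 := by
      rw [Submodule.mkQ_apply, Submodule.Quotient.mk_eq_zero]
      exact hμW m
    have := congrArg φ h0
    rw [map_sum, map_sum, map_zero] at this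
    simp only [LinearMap.map_smul, smul_eq_mul] at this
    rw [← this]
    apply Finset.sum_congr rfl
    intro q _
    rw [ha q m]
  -- grouping by β
  set B := S.image β with hB
  set Pb : RatFunc ℂ → Polynomial (RatFunc ℂ) := fun b =>
    ∑ q ∈ S.filter (fun q => β q = b), Polynomial.C (c q) * Polynomial.X ^ q.2.1 with hPb
  have hB0 : ∀ b ∈ B, b ≠ 0 := by
    intro b hb
    rw [hB, Finset.mem_image] at hb
    obtain ⟨q, hqS, rfl⟩ := hb
    have hq1 : q.1 ≠ 0 := by
      intro h
      rw [hS, Set.Finite.mem_toFinset, Function.mem_support] at hqS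
      exact hqS (hunit q h)
    rw [hβ]
    exact mul_ne_zero (by simpa using hq1)
      (pow_ne_zero _ (inv_ne_zero RatFunc.X_ne_zero))
  have hgroup : ∀ m : ℕ, ∑ b ∈ B, b ^ m * (Pb b).eval (m : RatFunc ℂ) = 0 := by
    intro m
    have e1 : ∀ b ∈ B, b ^ m * (Pb b).eval (m : RatFunc ℂ)
        = ∑ q ∈ S.filter (fun q => β q = b),
            (β q) ^ m * ((m : RatFunc ℂ)) ^ q.2.1 * c q := by
      intro b _
      rw [hPb]
      simp only [Polynomial.eval_finset_sum, Polynomial.eval_mul, Polynomial.eval_pow,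
        Polynomial.eval_C, Polynomial.eval_X, Finset.mul_sum]
      apply Finset.sum_congr rfl
      intro q hq
      rw [Finset.mem_filter] at hq
      rw [← hq.2]
      ring
    have h2 : ∑ b ∈ B, ∑ q ∈ S.filter (fun q => β q = b),
        (β q) ^ m * ((m : RatFunc ℂ)) ^ q.2.1 * c q
        = ∑ q ∈ S, (β q) ^ m * ((m : RatFunc ℂ)) ^ q.2.1 * c q :=
      Finset.sum_fiberwise_of_maps_to (fun q hq => Finset.mem_image_of_mem β hq) _
    rw [Finset.sum_congr rfl e1, h2]
    exact hrel m
  have hPb0 := key B hB0 Pb hgroup (β p) (Finset.mem_image_of_mem β hpS)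
  -- extract the coefficient
  have haux : ∀ q ∈ S.filter (fun q => β q = β p), q ≠ p →
      (Polynomial.C (c q) * Polynomial.X ^ q.2.1).coeff p.2.1 = 0 := by
    intro q hq hqp
    rw [Finset.mem_filter] at hq
    have hq1 : q.1 ≠ 0 := by
      intro h
      have hm := hq.1
      rw [hS, Set.Finite.mem_toFinset, Function.mem_support] at hm
      exact hm (hunit q h)
    have hqe : RatFunc.C q.1 * (RatFunc.X)⁻¹ ^ q.2.2
        = RatFunc.C p.1 * (RatFunc.X)⁻¹ ^ p.2.2 := hq.2
    obtain ⟨h1, h2⟩ := beta_inj hq1 hqe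
    have hk : q.2.1 ≠ p.2.1 := by
      intro hk
      exact hqp (Prod.ext h1 (Prod.ext hk h2))
    simp [Polynomial.coeff_X_pow, Ne.symm hk]
  have hcoeff : (Pb (β p)).coeff p.2.1 = c p := by
    have hs := Finset.sum_eq_single_of_mem
      (s := S.filter (fun q => β q = β p))
      (f := fun q => (Polynomial.C (c q) * Polynomial.X ^ q.2.1).coeff p.2.1)
      p (Finset.mem_filter.mpr ⟨hpS, rfl⟩) haux
    rw [hPb, Polynomial.finset_sum_coeff, hs]
    simp [Polynomial.coeff_C_mul, Polynomial.coeff_X_pow]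
  rw [hPb0, Polynomial.coeff_zero] at hcoeff
  rw [hc] at hcoeff
  exact hcoeff.symm
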